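/- Let g ≥ 1 and let q be an odd integer. Suppose P_0, ..., P_g ∈ Z[t] are polynomials such that (t-1)·P_0(t) ≡ t^{2g+1} + 1 (mod 2) and (t-1)·P_d(t) ≡ t^{2g+1} + t^{2g+1-d} + t^d + 1 (mod 2) for d = 1, ..., g. Then P_0, ..., P_g are linearly independent over Q. -/
import Mathlib


open Polynomial

private lemma stmt8_f2 (g : ℕ) (hg : 1 ≤ g) (a : Fin (g+1) → ZMod 2)
    (G : Fin (g+1) → (ZMod 2)[X])
    (hG0 : G 0 = X ^ (2*g+1) + 1)
    (hGd : ∀ d : Fin (g+1), 1 ≤ (d:ℕ) → G d = X ^ (2*g+1) + X ^ (2*g+1-(d:ℕ)) + X ^ (d:ℕ) + 1)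
    (h : ∑ i, a i • G i = 0) : ∀ i, a i = 0 := by
  have key : ∀ n, (∑ i, a i * (G i).coeff n) = 0 := by
    intro n
    have := congrArg (fun p => p.coeff n) h
    simpa [Polynomial.finset_sum_coeff, Polynomial.coeff_smul, smul_eq_mul] using this
  have hpos : ∀ d : Fin (g+1), 1 ≤ (d:ℕ) → a d = 0 := by
    intro d hd1
    have hdg : (d:ℕ) ≤ g := Nat.lt_succ_iff.mp d.isLt
    have hsum := key (d:ℕ)
    rw [Finset.sum_eq_single d] at hsum
    · have hcd : (G d).coeff (d:ℕ) = 1 := by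
        rw [hGd d hd1]
        simp only [coeff_add, coeff_X_pow, coeff_one]
        rw [if_neg (show ¬((d:ℕ) = 2*g+1) by omega), if_neg (show ¬((d:ℕ) = 2*g+1-(d:ℕ)) by omega)]
        simp [(show ¬((d:ℕ) = 0) by omega)]
      rwa [hcd, mul_one] at hsum
    · intro i _ hne
      have hz : (G i).coeff (d:ℕ) = 0 := by
        by_cases hi0 : 1 ≤ (i:ℕ)
        · have hig : (i:ℕ) ≤ g := Nat.lt_succ_iff.mp i.isLt
          have hdi : ¬ ((d:ℕ) = (i:ℕ)) := fun hh => hne (Fin.ext hh.symm)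
          rw [hGd i hi0]
          simp only [coeff_add, coeff_X_pow, coeff_one]
          rw [if_neg (by omega), if_neg (by omega), if_neg hdi, if_neg (by omega)]
          ring
        · have hi : i = 0 := Fin.ext (by simp only [Fin.val_zero]; omega)
          rw [hi, hG0]
          simp only [coeff_add, coeff_X_pow, coeff_one]
          rw [if_neg (by omega), if_neg (by omega)]
          ring
      rw [hz, mul_zero]
    · simp
  intro i
  by_cases hi : 1 ≤ (i:ℕ)
  · exact hpos i hi
  · have hi0 : i = 0 := Fin.ext (by simp only [Fin.val_zero]; omega)
    subst hi0
    have hsum := key 0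
    have hc : ∀ j : Fin (g+1), (G j).coeff 0 = 1 := by
      intro j
      by_cases hj : 1 ≤ (j:ℕ)
      · have hjg : (j:ℕ) ≤ g := Nat.lt_succ_iff.mp j.isLt
        rw [hGd j hj]
        simp only [coeff_add, coeff_X_pow, coeff_one]
        rw [if_neg (show ¬((0:ℕ) = 2*g+1) by omega), if_neg (show ¬((0:ℕ) = 2*g+1-(j:ℕ)) by omega), if_neg (show ¬((0:ℕ) = (j:ℕ)) by omega)]
        simp
      · have hj0 : j = 0 := Fin.ext (by simp only [Fin.val_zero]; omega)
        rw [hj0, hG0]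
        simp only [coeff_add, coeff_X_pow, coeff_one]
        rw [if_neg (show ¬((0:ℕ) = 2*g+1) by omega)]
        simp
    simp only [hc, mul_one] at hsum
    rwa [Finset.sum_eq_single 0 (fun j _ hne => hpos j (Fin.pos_iff_ne_zero.mpr hne)) (by simp)] at hsum

private lemma stmt8_int (g : ℕ) (P : Fin (g+1) → ℤ[X])
    (f2 : ∀ a : Fin (g+1) → ZMod 2,
      (∑ i, a i • ((X - 1) * P i).map (Int.castRingHom (ZMod 2))) = 0 → ∀ i, a i = 0) :
    ∀ n : ℕ, ∀ c : Fin (g+1) → ℤ, (∑ i, (c i).natAbs) = n → (∑ i, c i • P i) = 0 →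
      ∀ i, c i = 0 := by
  intro n
  induction n using Nat.strong_induction_on with
  | _ n IH =>
    intro c hn hrel
    by_cases hc : ∀ i, c i = 0
    · exact hc
    · push_neg at hc
      obtain ⟨j, hj⟩ := hc
      have hrel2 : (∑ i, ((c i : ZMod 2)) • ((X - 1) * P i).map (Int.castRingHom (ZMod 2))) = 0 := by
        have hmap : (∑ i, ((c i : ZMod 2)) • ((X - 1) * P i).map (Int.castRingHom (ZMod 2)))
            = ((X - 1) * ∑ i, c i • P i).map (Int.castRingHom (ZMod 2)) := by
          rw [Finset.mul_sum, Polynomial.map_sum]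
          refine Finset.sum_congr rfl fun i _ => ?_
          rw [Polynomial.smul_eq_C_mul,
            show (X - 1) * (c i • P i) = C (c i) * ((X - 1) * P i) by
              rw [Polynomial.smul_eq_C_mul]; ring,
            Polynomial.map_mul (f := Int.castRingHom (ZMod 2)) (p := C (c i)), Polynomial.map_C]
          simp
        rw [hmap, hrel, mul_zero, Polynomial.map_zero]
      have h2 : ∀ i, (2 : ℤ) ∣ c i := by
        intro i
        have := f2 _ hrel2 i
        exact_mod_cast (ZMod.intCast_zmod_eq_zero_iff_dvd (c i) 2).mp this
      set c' : Fin (g+1) → ℤ := fun i => c i / 2 with hc'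
      have hcc : ∀ i, c i = 2 * c' i := fun i => (Int.mul_ediv_cancel' (h2 i)).symm
      have hrel' : (∑ i, c' i • P i) = 0 := by
        have h2r : (C 2 : ℤ[X]) * ∑ i, c' i • P i = 0 := by
          rw [Finset.mul_sum]
          rw [← hrel]
          refine Finset.sum_congr rfl fun i _ => ?_
          rw [Polynomial.smul_eq_C_mul, Polynomial.smul_eq_C_mul, ← mul_assoc, ← C_mul,
            ← hcc i]
        rcases mul_eq_zero.mp h2r with h | h
        · exact absurd h (by simp)
        · exact h
      have hlt : (∑ i, (c' i).natAbs) < n := by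
        rw [← hn]
        refine Finset.sum_lt_sum (fun i _ => ?_) ⟨j, Finset.mem_univ j, ?_⟩
        · have := hcc i; omega
        · have := hcc j; omega
      have := IH _ hlt c' rfl hrel'
      intro i
      rw [hcc i, this i, mul_zero]

theorem stmt8 (g : ℕ) (hg : 1 ≤ g) (q : ℤ) (hq : Odd q)
    (P : Fin (g + 1) → Polynomial ℤ)
    (h0 : ((X - 1) * P 0).map (Int.castRingHom (ZMod 2)) = X ^ (2 * g + 1) + 1)
    (hd : ∀ d : Fin (g + 1), 1 ≤ (d : ℕ) →
      ((X - 1) * P d).map (Int.castRingHom (ZMod 2)) =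
        X ^ (2 * g + 1) + X ^ (2 * g + 1 - (d : ℕ)) + X ^ (d : ℕ) + 1) :
    LinearIndependent ℚ (fun d => (P d).map (Int.castRingHom ℚ)) := by
  have f2 : ∀ a : Fin (g+1) → ZMod 2,
      (∑ i, a i • ((X - 1) * P i).map (Int.castRingHom (ZMod 2))) = 0 → ∀ i, a i = 0 :=
    fun a h => stmt8_f2 g hg a _ h0 hd h
  have hZ : LinearIndependent ℤ P := by
    rw [Fintype.linearIndependent_iff]
    intro c hrel
    exact stmt8_int g P f2 _ c rfl hrel
  have hZQ : LinearIndependent ℤ (fun d => (P d).map (Int.castRingHom ℚ)) := by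
    have hinj : Function.Injective (Polynomial.map (Int.castRingHom ℚ) : ℤ[X] → ℚ[X]) :=
      Polynomial.map_injective _ Int.cast_injective
    let f : ℤ[X] →ₗ[ℤ] ℚ[X] :=
      (Polynomial.mapRingHom (Int.castRingHom ℚ)).toAddMonoidHom.toIntLinearMap
    have := hZ.map' f (LinearMap.ker_eq_bot.mpr hinj)
    exact this
  exact (LinearIndependent.iff_fractionRing ℤ ℚ).mp hZQ
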